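/- For every β > 0 and every integer m ≥ 1, S_m + 1 ≤ 2·T_m, where S_m = Σ_{j=1}^m e^{−2βj} and T_m = (Σ_{j=1}^m j·e^{−2βj})/S_m. Equivalently, for every real x ∈ (0,1) and every integer m ≥ 1, 1 − (2m+1)x^m + (2m+1)x^{m+1} − x^{2m+1} ≥ 0. -/

import Mathlib

namespace SOS

/-- `S_m = Σ_{j=1}^m e^{-2βj}`, with `S_0 = 0`. -/
noncomputable def S (β : ℝ) (m : ℕ) : ℝ :=
  ∑ j ∈ Finset.Icc 1 m, Real.exp (-(2 * β) * (j : ℝ))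

/-- `T_m = (Σ_{j=1}^m j e^{-2βj}) / S_m`. -/
noncomputable def T (β : ℝ) (m : ℕ) : ℝ :=
  (∑ j ∈ Finset.Icc 1 m, (j : ℝ) * Real.exp (-(2 * β) * (j : ℝ))) / S β m

/-- AM-GM style termwise bound. -/
lemma term_bound (x : ℝ) (hx0 : 0 ≤ x) (m k : ℕ) (hk : k ≤ 2 * m) :
    2 * x ^ m ≤ x ^ k + x ^ (2 * m - k) := by
  rcases le_total k m with h | h
  · obtain ⟨d, hd⟩ : ∃ d, m = k + d := ⟨m - k, by omega⟩
    have h2 : 2 * m - k = k + 2 * d := by omega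
    subst hd
    rw [h2]
    have := mul_nonneg (pow_nonneg hx0 k) (sq_nonneg (1 - x ^ d))
    have e1 : x ^ (k + d) = x ^ k * x ^ d := pow_add x k d
    have e2 : x ^ (k + 2 * d) = x ^ k * (x ^ d) ^ 2 := by
      rw [pow_add, mul_comm 2 d, pow_mul]
    nlinarith [this]
  · obtain ⟨d, hd⟩ : ∃ d, k = m + d := ⟨k - m, by omega⟩
    have hdm : d ≤ m := by omega
    obtain ⟨e, he⟩ : ∃ e, m = e + d := ⟨m - d, by omega⟩
    have h2 : 2 * m - k = e := by omega
    have h3 : k = e + 2 * d := by omega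
    rw [h2, h3, he]
    have := mul_nonneg (pow_nonneg hx0 e) (sq_nonneg (1 - x ^ d))
    have e1 : x ^ (e + d) = x ^ e * x ^ d := pow_add x e d
    have e2 : x ^ (e + 2 * d) = x ^ e * (x ^ d) ^ 2 := by
      rw [pow_add, mul_comm 2 d, pow_mul]
    nlinarith [this]

lemma geom_ge (x : ℝ) (hx0 : 0 ≤ x) (m : ℕ) :
    (2 * (m : ℝ) + 1) * x ^ m ≤ ∑ k ∈ Finset.range (2 * m + 1), x ^ k := by
  have hrefl : ∑ k ∈ Finset.range (2 * m + 1), x ^ (2 * m - k)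
      = ∑ k ∈ Finset.range (2 * m + 1), x ^ k := by
    have := Finset.sum_range_reflect (fun k => x ^ k) (2 * m + 1)
    simpa using this
  have hsum : ∑ k ∈ Finset.range (2 * m + 1), (2 * x ^ m)
      ≤ ∑ k ∈ Finset.range (2 * m + 1), (x ^ k + x ^ (2 * m - k)) := by
    apply Finset.sum_le_sum
    intro k hk
    exact term_bound x hx0 m k (by simp at hk; omega)
  rw [Finset.sum_add_distrib, hrefl, Finset.sum_const, Finset.card_range] at hsum
  rw [nsmul_eq_mul] at hsum
  have hc : ((2 * m + 1 : ℕ) : ℝ) = 2 * (m : ℝ) + 1 := by push_cast; ring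
  rw [hc] at hsum
  linarith

lemma poly_nonneg (x : ℝ) (hx0 : 0 ≤ x) (hx1 : x ≤ 1) (m : ℕ) :
    0 ≤ 1 - (2 * (m : ℝ) + 1) * x ^ m + (2 * (m : ℝ) + 1) * x ^ (m + 1)
        - x ^ (2 * m + 1) := by
  have h1 : (∑ i ∈ Finset.range (2 * m + 1), x ^ i) * (x - 1)
      = x ^ (2 * m + 1) - 1 := geom_sum_mul x (2 * m + 1)
  have h2 := geom_ge x hx0 m
  have h3 : 0 ≤ (1 - x) * ((∑ i ∈ Finset.range (2 * m + 1), x ^ i)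
      - (2 * (m : ℝ) + 1) * x ^ m) := mul_nonneg (by linarith) (by linarith)
  have h4 : (1 - x) * ((∑ i ∈ Finset.range (2 * m + 1), x ^ i)
      - (2 * (m : ℝ) + 1) * x ^ m)
      = 1 - (2 * (m : ℝ) + 1) * x ^ m + (2 * (m : ℝ) + 1) * x ^ (m + 1)
        - x ^ (2 * m + 1) := by
    linear_combination (-1 : ℝ) * h1
  linarith [h4 ▸ h3]

lemma sumA (x : ℝ) (m : ℕ) :
    (1 - x) * (∑ j ∈ Finset.Icc 1 m, x ^ j) = x - x ^ m * x := by
  induction m with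
  | zero => simp
  | succ n ih =>
    rw [Finset.sum_Icc_succ_top (Nat.succ_le_succ (Nat.zero_le n))]
    linear_combination ih

lemma sumB (x : ℝ) (m : ℕ) :
    (1 - x) ^ 2 * (∑ j ∈ Finset.Icc 1 m, (j : ℝ) * x ^ j)
      = x - ((m : ℝ) + 1) * (x ^ m * x) + (m : ℝ) * (x ^ m * x * x) := by
  induction m with
  | zero => simp
  | succ n ih =>
    rw [Finset.sum_Icc_succ_top (Nat.succ_le_succ (Nat.zero_le n))]
    push_cast
    linear_combination ih

/-- `S_m + 1 ≤ 2 T_m`; equivalently, `1 - (2m+1)x^m + (2m+1)x^{m+1} - x^{2m+1} ≥ 0`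
for all `x ∈ (0,1)`. -/
theorem S_add_one_le_two_T (β : ℝ) (hβ : 0 < β) (m : ℕ) (hm : 1 ≤ m) :
    S β m + 1 ≤ 2 * T β m ∧
      ∀ x : ℝ, 0 < x → x < 1 →
        0 ≤ 1 - (2 * (m : ℝ) + 1) * x ^ m + (2 * (m : ℝ) + 1) * x ^ (m + 1)
              - x ^ (2 * m + 1) := by
  constructor
  · set x : ℝ := Real.exp (-(2 * β)) with hxdef
    have hx0 : 0 < x := Real.exp_pos _
    have hx1 : x < 1 := Real.exp_lt_one_iff.mpr (by linarith)
    have hxj : ∀ j : ℕ, Real.exp (-(2 * β) * (j : ℝ)) = x ^ j := by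
      intro j
      rw [hxdef, ← Real.exp_nat_mul, mul_comm]
    have hSeq : S β m = ∑ j ∈ Finset.Icc 1 m, x ^ j := by
      unfold S; exact Finset.sum_congr rfl fun j _ => hxj j
    have hNeq : (∑ j ∈ Finset.Icc 1 m, (j : ℝ) * Real.exp (-(2 * β) * (j : ℝ)))
        = ∑ j ∈ Finset.Icc 1 m, (j : ℝ) * x ^ j := by
      exact Finset.sum_congr rfl fun j _ => by rw [hxj j]
    set Sx : ℝ := ∑ j ∈ Finset.Icc 1 m, x ^ j with hSx
    set Nx : ℝ := ∑ j ∈ Finset.Icc 1 m, (j : ℝ) * x ^ j with hNx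
    have hSpos : 0 < Sx := by
      apply Finset.sum_pos (fun j _ => pow_pos hx0 j)
      exact ⟨1, Finset.mem_Icc.mpr ⟨le_refl 1, hm⟩⟩
    have hA := sumA x m
    have hB := sumB x m
    rw [← hSx] at hA
    rw [← hNx] at hB
    have hP := poly_nonneg x hx0.le hx1.le m
    have hxP : 0 ≤ x * (1 - (2 * (m : ℝ) + 1) * x ^ m
        + (2 * (m : ℝ) + 1) * x ^ (m + 1) - x ^ (2 * m + 1)) :=
      mul_nonneg hx0.le hP
    have key : (Sx + 1) * Sx ≤ 2 * Nx := by
      have hsq : (0 : ℝ) < (1 - x) ^ 2 := pow_pos (by linarith) 2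
      rw [← mul_le_mul_iff_of_pos_right hsq]
      have e1 : (Sx + 1) * Sx * (1 - x) ^ 2 = (1 - x ^ m * x) * (x - x ^ m * x) := by
        linear_combination ((1 - x) * Sx + (x - x ^ m * x) + (1 - x)) * hA
      have e2 : 2 * Nx * (1 - x) ^ 2
          = 2 * (x - ((m : ℝ) + 1) * (x ^ m * x) + (m : ℝ) * (x ^ m * x * x)) := by
        linear_combination 2 * hB
      have ep1 : x ^ (m + 1) = x ^ m * x := pow_succ x m
      have ep2 : x ^ (2 * m + 1) = x ^ m * x ^ m * x := by
        rw [pow_succ, two_mul, pow_add]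
      rw [ep1, ep2] at hxP
      rw [e1, e2]
      nlinarith [hxP]
    have hT : T β m = Nx / Sx := by
      unfold T
      rw [hNeq, hSeq]
    rw [hT, hSeq, mul_div_assoc']
    rw [le_div_iff₀ hSpos]
    linarith [key]
  · intro x hx0 hx1
    exact poly_nonneg x hx0.le hx1.le m
end SOS
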